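/- Let K be a planar convex body with two boundary points x, y such that the interior angles of K at both x and y are at most π/3. Then the segment xy is a diameter of K, i.e., ‖x − y‖ equals the diameter of K. -/
import Mathlib


open EuclideanGeometry Metric Set

noncomputable section

abbrev E2 := EuclideanSpace ℝ (Fin 2)

/-- The interior angle of a planar convex body `K` at a boundary point `x`:
the angle measure of the tangent cone of `K` at `x`, i.e. the supremum of the
angles `∠ a x b` over points `a, b` of `K` distinct from `x`. -/
noncomputable def interiorAngle (K : Set E2) (x : E2) : ℝ :=
  sSup {θ : ℝ | ∃ a ∈ K, ∃ b ∈ K, a ≠ x ∧ b ≠ x ∧ θ = ∠ a x b}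

/-- If a planar convex body has two boundary points with interior angle at most
`π/3` at each, then these points determine a diameter. -/
theorem diameter_of_two_angles_le_pi_div_three
    (K : Set E2) (hcomp : IsCompact K) (hconv : Convex ℝ K)
    (hint : (interior K).Nonempty)
    (x y : E2) (hx : x ∈ frontier K) (hy : y ∈ frontier K) (hxy : x ≠ y)
    (hangx : interiorAngle K x ≤ Real.pi / 3)
    (hangy : interiorAngle K y ≤ Real.pi / 3) :
    dist x y = Metric.diam K := by
  have hclosed : IsClosed K := hcomp.isClosed
  have hxK : x ∈ K := by
    have := frontier_subset_closure hx
    rwa [hclosed.closure_eq] at this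
  have hyK : y ∈ K := by
    have := frontier_subset_closure hy
    rwa [hclosed.closure_eq] at this
  have hdpos : 0 < dist x y := dist_pos.mpr hxy
  -- angle bound at any point p with the sSup hypothesis
  have key : ∀ (p : E2), p ∈ K → interiorAngle K p ≤ Real.pi / 3 →
      ∀ a ∈ K, ∀ b ∈ K, a ≠ p → b ≠ p → ∠ a p b ≤ Real.pi / 3 := by
    intro p hpK hang a haK b hbK hap hbp
    refine le_trans ?_ hang
    apply le_csSup
    · refine ⟨Real.pi, ?_⟩
      rintro θ ⟨a', _, b', _, _, _, rfl⟩
      exact EuclideanGeometry.angle_le_pi a' p b'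
    · exact ⟨a, haK, b, hbK, hap, hbp, rfl⟩
  have keyx := key x hxK hangx
  have keyy := key y hyK hangy
  have hpi : Real.pi / 3 ≤ Real.pi := by linarith [Real.pi_pos]
  -- cos bound
  have coskey : ∀ {θ : ℝ}, 0 ≤ θ → θ ≤ Real.pi / 3 → (1:ℝ)/2 ≤ Real.cos θ := by
    intro θ h0 h3
    have h := Real.cos_le_cos_of_nonneg_of_le_pi h0 hpi h3
    rwa [Real.cos_pi_div_three] at h
  -- distances from x and from y are at most dist x y
  have hdistxy : ∀ a ∈ K, dist a x ≤ dist x y ∧ dist a y ≤ dist x y := by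
    intro a haK
    rcases eq_or_ne a x with h | hax
    · constructor
      · rw [h]; simpa using hdpos.le
      · rw [h, dist_comm x y]
    rcases eq_or_ne a y with h | hay
    · constructor
      · rw [h, dist_comm]
      · rw [h]; simpa using hdpos.le
    have hcx : (1:ℝ)/2 ≤ Real.cos (∠ y x a) :=
      coskey (EuclideanGeometry.angle_nonneg _ _ _) (keyx y hyK a haK hxy.symm hax)
    have hcy : (1:ℝ)/2 ≤ Real.cos (∠ x y a) :=
      coskey (EuclideanGeometry.angle_nonneg _ _ _) (keyy x hxK a haK hxy hay)
    have lc1 := EuclideanGeometry.law_cos y x a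
    have lc2 := EuclideanGeometry.law_cos x y a
    rw [dist_comm y x] at lc1
    rw [dist_comm y a] at lc1
    rw [dist_comm x a] at lc2
    have hu0 : (0:ℝ) ≤ dist a x := dist_nonneg
    have hv0 : (0:ℝ) ≤ dist a y := dist_nonneg
    have e1 : dist a y * dist a y ≤
        dist x y * dist x y + dist a x * dist a x - dist x y * dist a x := by
      nlinarith [mul_nonneg (mul_nonneg hdpos.le hu0) (by linarith :
        (0:ℝ) ≤ Real.cos (∠ y x a) - 1/2)]
    have e2 : dist a x * dist a x ≤
        dist x y * dist x y + dist a y * dist a y - dist x y * dist a y := by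
      nlinarith [mul_nonneg (mul_nonneg hdpos.le hv0) (by linarith :
        (0:ℝ) ≤ Real.cos (∠ x y a) - 1/2)]
    have hsum : dist a x + dist a y ≤ 2 * dist x y := by nlinarith
    constructor
    · by_contra hcon
      push_neg at hcon
      have hvs : dist a y ≤ dist x y := by linarith
      nlinarith [mul_nonneg hv0 (sub_nonneg.mpr hvs)]
    · by_contra hcon
      push_neg at hcon
      have hus : dist a x ≤ dist x y := by linarith
      nlinarith [mul_nonneg hu0 (sub_nonneg.mpr hus)]
  -- all pairwise distances at most dist x y
  have hpair : ∀ a ∈ K, ∀ b ∈ K, dist a b ≤ dist x y := by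
    intro a haK b hbK
    rcases eq_or_ne a x with h | hax
    · rw [h, dist_comm]
      exact (hdistxy b hbK).1
    rcases eq_or_ne b x with h | hbx
    · rw [h]
      exact (hdistxy a haK).1
    have hcx : (1:ℝ)/2 ≤ Real.cos (∠ a x b) :=
      coskey (EuclideanGeometry.angle_nonneg _ _ _) (keyx a haK b hbK hax hbx)
    have lc := EuclideanGeometry.law_cos a x b
    have hu := (hdistxy a haK).1
    have hw := (hdistxy b hbK).1
    have hu0 : (0:ℝ) ≤ dist a x := dist_nonneg
    have hw0 : (0:ℝ) ≤ dist b x := dist_nonneg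
    have hab0 : (0:ℝ) ≤ dist a b := dist_nonneg
    nlinarith [mul_nonneg (mul_nonneg hu0 hw0) (by linarith :
        (0:ℝ) ≤ Real.cos (∠ a x b) - 1/2),
      mul_nonneg (sub_nonneg.mpr hu) (sub_nonneg.mpr hw),
      mul_nonneg (sub_nonneg.mpr hu) hu0,
      mul_nonneg (sub_nonneg.mpr hw) hw0,
      mul_nonneg (sub_nonneg.mpr hu) hw0,
      mul_nonneg (sub_nonneg.mpr hw) hu0]
  refine le_antisymm (Metric.dist_le_diam_of_mem hcomp.isBounded hxK hyK) ?_
  exact Metric.diam_le_of_forall_dist_le hdpos.le hpair
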